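/- arXiv:1007.1484 — 2 statements merged into one kernel-verified Lean document; each statement's English description precedes it below -/
import Mathlib

section
/- Let G be a finite directed flow network with nonnegative real edge capacities and let P, Q, R, S be four pairwise disjoint sets of terminal vertices. Then (P ↛ Q∪R∪S) + (P∪Q∪R ↛ S) ≤ (P∪Q ↛ R∪S) + (P∪R ↛ Q∪S). -/
open Finset

/-- Capacity of the cut determined by vertex set `A`: total capacity of edges leaving `A`. -/
def cutCap {V : Type} [Fintype V] [DecidableEq V] (c : V → V → ℝ) (A : Finset V) : ℝ :=
  ∑ u ∈ A, ∑ v ∈ Aᶜ, c u v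

/-- Minimum capacity of a cut with all of `S` on the source side and all of `T` on the sink side. -/
noncomputable def minCut {V : Type} [Fintype V] [DecidableEq V] (c : V → V → ℝ) (S T : Finset V) : ℝ :=
  sInf {x : ℝ | ∃ A : Finset V, S ⊆ A ∧ Disjoint T A ∧ x = cutCap c A}

/-- Net outflow of `f` at vertex `v`. -/
def netOut {V : Type} [Fintype V] (f : V → V → ℝ) (v : V) : ℝ :=
  (∑ w, f v w) - ∑ w, f w v

/-- `f` is an external flow in the network with capacities `c`, terminals `q` and
terminal net-outflow values `x`. -/
def IsExtFlow {V : Type} [Fintype V] {k : ℕ} (c f : V → V → ℝ) (q : Fin k → V)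
    (x : Fin k → ℝ) : Prop :=
  (∀ u v, 0 ≤ f u v ∧ f u v ≤ c u v) ∧
  (∀ v, (∀ i, q i ≠ v) → netOut f v = 0) ∧
  (∀ i, netOut f (q i) = x i)

lemma cutSet_finite {V : Type} [Fintype V] [DecidableEq V] (c : V → V → ℝ) (S T : Finset V) :
    {x : ℝ | ∃ A : Finset V, S ⊆ A ∧ Disjoint T A ∧ x = cutCap c A}.Finite := by
  have : {x : ℝ | ∃ A : Finset V, S ⊆ A ∧ Disjoint T A ∧ x = cutCap c A} ⊆
      Set.range (fun A : Finset V => cutCap c A) := by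
    rintro x ⟨A, _, _, rfl⟩; exact ⟨A, rfl⟩
  exact Set.Finite.subset (Set.finite_range _) this

lemma minCut_le {V : Type} [Fintype V] [DecidableEq V] (c : V → V → ℝ) (S T : Finset V)
    (B : Finset V) (hS : S ⊆ B) (hT : Disjoint T B) : minCut c S T ≤ cutCap c B :=
  csInf_le (cutSet_finite c S T).bddBelow ⟨B, hS, hT, rfl⟩

lemma minCut_exists {V : Type} [Fintype V] [DecidableEq V] (c : V → V → ℝ) (S T : Finset V)
    (h : Disjoint T S) :
    ∃ A : Finset V, S ⊆ A ∧ Disjoint T A ∧ minCut c S T = cutCap c A := by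
  have hne : {x : ℝ | ∃ A : Finset V, S ⊆ A ∧ Disjoint T A ∧ x = cutCap c A}.Nonempty :=
    ⟨cutCap c S, S, subset_rfl, h, rfl⟩
  exact hne.csInf_mem (cutSet_finite c S T)

lemma cutCap_eq {V : Type} [Fintype V] [DecidableEq V] (c : V → V → ℝ) (A : Finset V) :
    cutCap c A = ∑ u, ∑ v, (if u ∈ A ∧ v ∉ A then c u v else 0) := by
  rw [cutCap]
  rw [← Finset.sum_filter_add_sum_filter_not Finset.univ (· ∈ A)
    (fun u => ∑ v, if u ∈ A ∧ v ∉ A then c u v else 0)]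
  have h1 : ∀ u ∈ Finset.univ.filter (· ∈ A),
      (∑ v, if u ∈ A ∧ v ∉ A then c u v else 0) = ∑ v ∈ Aᶜ, c u v := by
    intro u hu
    simp only [Finset.mem_filter] at hu
    rw [← Finset.sum_filter_add_sum_filter_not Finset.univ (· ∉ A)]
    have : ∀ v ∈ Finset.univ.filter (¬ · ∉ A), (if u ∈ A ∧ v ∉ A then c u v else 0) = 0 := by
      intro v hv; simp only [Finset.mem_filter] at hv; simp [hv.2]
    rw [Finset.sum_congr rfl this, Finset.sum_const_zero, add_zero]
    apply Finset.sum_congr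
    · ext v; simp [Finset.mem_compl]
    · intro v hv; rw [Finset.mem_compl] at hv; simp [hu.2, hv]
  have h2 : ∀ u ∈ Finset.univ.filter (¬ · ∈ A),
      (∑ v, if u ∈ A ∧ v ∉ A then c u v else 0) = 0 := by
    intro u hu; simp only [Finset.mem_filter] at hu
    apply Finset.sum_eq_zero; intro v _; simp [hu.2]
  rw [Finset.sum_congr rfl h1, Finset.sum_congr rfl h2, Finset.sum_const_zero, add_zero]
  apply Finset.sum_congr
  · ext u; simp
  · intros; rfl

lemma cutCap_submodular {V : Type} [Fintype V] [DecidableEq V] (c : V → V → ℝ)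
    (hc : ∀ u v, 0 ≤ c u v) (A B : Finset V) :
    cutCap c (A ∩ B) + cutCap c (A ∪ B) ≤ cutCap c A + cutCap c B := by
  simp only [cutCap_eq, ← Finset.sum_add_distrib]
  apply Finset.sum_le_sum; intro u _
  apply Finset.sum_le_sum; intro v _
  have := hc u v
  by_cases hA : u ∈ A <;> by_cases hB : u ∈ B <;> by_cases hA' : v ∈ A <;> by_cases hB' : v ∈ B <;>
    simp [Finset.mem_inter, Finset.mem_union, hA, hB, hA', hB'] <;> linarith

theorem stmt1 {V : Type} [Fintype V] [DecidableEq V] (c : V → V → ℝ)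
    (hc : ∀ u v, 0 ≤ c u v) (P Q R S : Finset V)
    (hPQ : Disjoint P Q) (hPR : Disjoint P R) (hPS : Disjoint P S)
    (hQR : Disjoint Q R) (hQS : Disjoint Q S) (hRS : Disjoint R S) :
    minCut c P (Q ∪ R ∪ S) + minCut c (P ∪ Q ∪ R) S ≤
      minCut c (P ∪ Q) (R ∪ S) + minCut c (P ∪ R) (Q ∪ S) := by
  obtain ⟨A, hA1, hA2, hA3⟩ := minCut_exists c (P ∪ Q) (R ∪ S) (by
    rw [Finset.disjoint_union_left, Finset.disjoint_union_right, Finset.disjoint_union_right]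
    exact ⟨⟨hPR.symm, hQR.symm⟩, hPS.symm, hQS.symm⟩)
  obtain ⟨B, hB1, hB2, hB3⟩ := minCut_exists c (P ∪ R) (Q ∪ S) (by
    rw [Finset.disjoint_union_left, Finset.disjoint_union_right, Finset.disjoint_union_right]
    exact ⟨⟨hPQ.symm, hQR⟩, hPS.symm, hRS.symm⟩)
  rw [Finset.disjoint_union_left] at hA2 hB2
  have h1 : minCut c P (Q ∪ R ∪ S) ≤ cutCap c (A ∩ B) := by
    apply minCut_le
    · exact Finset.subset_inter ((Finset.subset_union_left).trans hA1)
        ((Finset.subset_union_left).trans hB1)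
    · rw [Finset.disjoint_union_left, Finset.disjoint_union_left]
      refine ⟨⟨?_, ?_⟩, ?_⟩
      · exact Finset.disjoint_of_subset_right Finset.inter_subset_right hB2.1
      · exact Finset.disjoint_of_subset_right Finset.inter_subset_left hA2.1
      · exact Finset.disjoint_of_subset_right Finset.inter_subset_left hA2.2
  have h2 : minCut c (P ∪ Q ∪ R) S ≤ cutCap c (A ∪ B) := by
    apply minCut_le
    · apply Finset.union_subset
      · exact hA1.trans Finset.subset_union_left
      · exact (Finset.subset_union_right.trans hB1).trans Finset.subset_union_right
    · rw [Finset.disjoint_union_right]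
      exact ⟨hA2.2, hB2.2⟩
  calc minCut c P (Q ∪ R ∪ S) + minCut c (P ∪ Q ∪ R) S
      ≤ cutCap c (A ∩ B) + cutCap c (A ∪ B) := add_le_add h1 h2
    _ ≤ cutCap c A + cutCap c B := cutCap_submodular c hc A B
    _ = minCut c (P ∪ Q) (R ∪ S) + minCut c (P ∪ R) (Q ∪ S) := by rw [hA3, hB3]
end

section
/- An external flow (x_1, …, x_k) is realizable in a finite directed flow network G with terminals q_1, …, q_k if and only if (1) the sum of all x_i is 0, and (2) for every nonempty proper subset S of the terminals, the sum of x_i over q_i ∈ S is at most the minimum capacity of a cut separating S from its complement in the terminal set. -/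
open Finset

variable {V : Type} [Fintype V] [DecidableEq V]

set_option linter.unusedSectionVars false

def Feas {V : Type} [Fintype V] (c f : V → V → ℝ) : Prop := ∀ u v, 0 ≤ f u v ∧ f u v ≤ c u v

variable {V : Type} [Fintype V] [DecidableEq V]

lemma sum_netOut (f : V → V → ℝ) (A : Finset V) :
    ∑ v ∈ A, netOut f v = (∑ u ∈ A, ∑ v ∈ Aᶜ, f u v) - ∑ u ∈ A, ∑ v ∈ Aᶜ, f v u := by
  unfold netOut
  rw [Finset.sum_sub_distrib]
  have e1 : ∀ g : V → V → ℝ, ∑ v ∈ A, ∑ w, g v w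
      = (∑ v ∈ A, ∑ w ∈ Aᶜ, g v w) + ∑ v ∈ A, ∑ w ∈ A, g v w := by
    intro g
    rw [← Finset.sum_add_distrib]
    congr 1; ext v
    rw [Finset.sum_compl_add_sum]
  rw [e1, e1]
  have e2 : ∑ v ∈ A, ∑ w ∈ A, (fun a b => f b a) v w = ∑ v ∈ A, ∑ w ∈ A, f v w :=
    Finset.sum_comm
  simp only at e2
  rw [e2]
  ring

lemma sum_netOut_univ (f : V → V → ℝ) : ∑ v, netOut f v = 0 := by
  unfold netOut
  rw [Finset.sum_sub_distrib, Finset.sum_comm]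
  ring

lemma cutCap_nonneg {c : V → V → ℝ} (hc : ∀ u v, 0 ≤ c u v) (A : Finset V) : 0 ≤ cutCap c A := by
  apply Finset.sum_nonneg; intro u _; apply Finset.sum_nonneg; intro v _; exact hc u v

lemma sum_netOut_le {c f : V → V → ℝ} (hf : Feas c f) (A : Finset V) :
    ∑ v ∈ A, netOut f v ≤ cutCap c A := by
  rw [sum_netOut]
  have h1 : ∑ u ∈ A, ∑ v ∈ Aᶜ, f u v ≤ cutCap c A := by
    apply Finset.sum_le_sum; intro u _; apply Finset.sum_le_sum; intro v _; exact (hf u v).2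
  have h2 : 0 ≤ ∑ u ∈ A, ∑ v ∈ Aᶜ, f v u := by
    apply Finset.sum_nonneg; intro u _; apply Finset.sum_nonneg; intro v _; exact (hf v u).1
  linarith

set_option linter.unusedSectionVars false

/-- Residual relation. -/
def Res (c f : V → V → ℝ) (u v : V) : Prop := f u v < c u v ∨ 0 < f v u

def bump (f : V → V → ℝ) (u v : V) (δ : ℝ) : V → V → ℝ :=
  fun a b => if a = u ∧ b = v then f a b + δ else f a b

lemma bump_ne {f : V → V → ℝ} {u v a b : V} (h : ¬(a = u ∧ b = v)) (δ : ℝ) :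
    bump f u v δ a b = f a b := by simp [bump, h]

lemma netOut_bump (f : V → V → ℝ) {u v : V} (h : u ≠ v) (δ : ℝ) (w : V) :
    netOut (bump f u v δ) w = netOut f w + (if w = u then δ else 0) - (if w = v then δ else 0) := by
  have key : ∀ a b, bump f u v δ a b = f a b + (if a = u ∧ b = v then δ else 0) := by
    intro a b; unfold bump; by_cases hab : a = u ∧ b = v <;> simp [hab]
  have hrow : ∀ a, ∑ b, bump f u v δ a b = (∑ b, f a b) + (if a = u then δ else 0) := by
    intro a
    simp only [key, Finset.sum_add_distrib]
    congr 1
    by_cases ha : a = u <;> simp [ha]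
  have hcol : ∀ b, ∑ a, bump f u v δ a b = (∑ a, f a b) + (if b = v then δ else 0) := by
    intro b
    simp only [key, Finset.sum_add_distrib]
    congr 1
    by_cases hb : b = v <;> simp [hb]
  unfold netOut
  rw [hrow, hcol]
  ring

lemma step_aug {c f : V → V → ℝ} (hf : Feas c f) {u v : V} (huv : u ≠ v) (h : Res c f u v) :
    ∃ ε > 0, ∀ δ : ℝ, 0 < δ → δ ≤ ε → ∃ f', Feas c f' ∧
      (∀ a b, ¬((a = u ∧ b = v) ∨ (a = v ∧ b = u)) → f' a b = f a b) ∧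
      netOut f' u = netOut f u + δ ∧ netOut f' v = netOut f v - δ ∧
      ∀ w, w ≠ u → w ≠ v → netOut f' w = netOut f w := by
  rcases h with h | h
  · refine ⟨c u v - f u v, by linarith, fun δ hδ0 hδε => ⟨bump f u v δ, ?_, ?_, ?_, ?_, ?_⟩⟩
    · intro a b
      by_cases hab : a = u ∧ b = v
      · obtain ⟨rfl, rfl⟩ := hab
        have hb : bump f a b δ a b = f a b + δ := by simp [bump]
        rw [hb]
        exact ⟨by linarith [(hf a b).1], by linarith⟩
      · rw [bump_ne hab]; exact hf a b
    · intro a b hab; exact bump_ne (fun hh => hab (Or.inl hh)) δ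
    · rw [netOut_bump f huv, if_pos rfl, if_neg huv]; ring
    · rw [netOut_bump f huv, if_pos rfl, if_neg (Ne.symm huv)]; ring
    · intro w hwu hwv; rw [netOut_bump f huv, if_neg hwu, if_neg hwv]; ring
  · refine ⟨f v u, h, fun δ hδ0 hδε => ⟨bump f v u (-δ), ?_, ?_, ?_, ?_, ?_⟩⟩
    · intro a b
      by_cases hab : a = v ∧ b = u
      · obtain ⟨rfl, rfl⟩ := hab
        have hb : bump f a b (-δ) a b = f a b + -δ := by simp [bump]
        rw [hb]
        exact ⟨by linarith, by linarith [(hf a b).2]⟩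
      · rw [bump_ne hab]; exact hf a b
    · intro a b hab; exact bump_ne (fun hh => hab (Or.inr hh)) (-δ)
    · rw [netOut_bump f (Ne.symm huv), if_neg huv, if_pos rfl]; ring
    · rw [netOut_bump f (Ne.symm huv), if_pos rfl, if_neg (Ne.symm huv)]; ring
    · intro w hwu hwv; rw [netOut_bump f (Ne.symm huv), if_neg hwv, if_neg hwu]; ring

/-- Residual capacity at least ε. -/
def ResGe (ε : ℝ) (c f : V → V → ℝ) (u v : V) : Prop := ε ≤ c u v - f u v ∨ ε ≤ f v u

lemma chain_resge {c f : V → V → ℝ} :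
    ∀ (l : List V) (a : V), List.Chain (Res c f) a l →
      ∃ ε > 0, List.Chain (ResGe ε c f) a l := by
  intro l
  induction l with
  | nil => exact fun a _ => ⟨1, one_pos, List.Chain.nil⟩
  | cons b m ih =>
    intro a hch
    obtain ⟨hab, hbm⟩ := List.isChain_cons_cons.mp hch
    obtain ⟨ε2, hε2, hch2⟩ := ih b hbm
    rcases hab with h | h
    · refine ⟨min (c a b - f a b) ε2, lt_min (by linarith) hε2, ?_⟩
      exact List.Chain.cons (Or.inl (min_le_left _ _))
        (List.IsChain.imp (fun u v hr => hr.imp (le_trans (min_le_right _ _)) (le_trans (min_le_right _ _))) hch2)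
    · refine ⟨min (f b a) ε2, lt_min h hε2, ?_⟩
      exact List.Chain.cons (Or.inr (min_le_left _ _))
        (List.IsChain.imp (fun u v hr => hr.imp (le_trans (min_le_right _ _)) (le_trans (min_le_right _ _))) hch2)

lemma step_exact {c f : V → V → ℝ} (hf : Feas c f) {u v : V} (huv : u ≠ v) {ε : ℝ}
    (hε : 0 < ε) (h : ResGe ε c f u v) :
    ∃ f', Feas c f' ∧
      (∀ p r, ¬((p = u ∧ r = v) ∨ (p = v ∧ r = u)) → f' p r = f p r) ∧
      netOut f' u = netOut f u + ε ∧ netOut f' v = netOut f v - ε ∧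
      ∀ w, w ≠ u → w ≠ v → netOut f' w = netOut f w := by
  rcases h with h | h
  · refine ⟨bump f u v ε, ?_, ?_, ?_, ?_, ?_⟩
    · intro a b
      by_cases hab : a = u ∧ b = v
      · obtain ⟨rfl, rfl⟩ := hab
        have hb : bump f a b ε a b = f a b + ε := by simp [bump]
        rw [hb]
        exact ⟨by linarith [(hf a b).1], by linarith⟩
      · rw [bump_ne hab]; exact hf a b
    · intro a b hab; exact bump_ne (fun hh => hab (Or.inl hh)) ε
    · rw [netOut_bump f huv, if_pos rfl, if_neg huv]; ring
    · rw [netOut_bump f huv, if_pos rfl, if_neg (Ne.symm huv)]; ring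
    · intro w hwu hwv; rw [netOut_bump f huv, if_neg hwu, if_neg hwv]; ring
  · refine ⟨bump f v u (-ε), ?_, ?_, ?_, ?_, ?_⟩
    · intro a b
      by_cases hab : a = v ∧ b = u
      · obtain ⟨rfl, rfl⟩ := hab
        have hb : bump f a b (-ε) a b = f a b + -ε := by simp [bump]
        rw [hb]
        exact ⟨by linarith, by linarith [(hf a b).2]⟩
      · rw [bump_ne hab]; exact hf a b
    · intro a b hab; exact bump_ne (fun hh => hab (Or.inr hh)) (-ε)
    · rw [netOut_bump f (Ne.symm huv), if_neg huv, if_pos rfl]; ring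
    · rw [netOut_bump f (Ne.symm huv), if_pos rfl, if_neg (Ne.symm huv)]; ring
    · intro w hwu hwv; rw [netOut_bump f (Ne.symm huv), if_neg hwv, if_neg hwu]; ring

lemma getLastD_mem : ∀ (l : List V) (d : V), l ≠ [] → l.getLastD d ∈ l := by
  intro l
  induction l with
  | nil => simp
  | cons b m ih =>
    intro d _
    rw [List.getLastD_cons]
    rcases eq_or_ne m [] with rfl | hm
    · simp
    · exact List.mem_cons_of_mem _ (ih b hm)

lemma chain_of_agree {R S : V → V → Prop} :
    ∀ (m : List V) (b : V), List.Chain R b m →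
      (∀ p r, p ∈ b :: m → r ∈ b :: m → R p r → S p r) → List.Chain S b m := by
  intro m
  induction m with
  | nil => intro b _ _; exact List.Chain.nil
  | cons x xs ih =>
    intro b hch h
    obtain ⟨hbx, hxs⟩ := List.isChain_cons_cons.mp hch
    refine List.Chain.cons (h b x (by simp) (by simp) hbx) (ih x hxs ?_)
    intro p r hp hr
    exact h p r (List.mem_cons_of_mem _ hp) (List.mem_cons_of_mem _ hr)

lemma augment {c : V → V → ℝ} {ε : ℝ} (hε : 0 < ε) :
    ∀ (l : List V) (a : V) (f : V → V → ℝ), Feas c f →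
      List.Chain (ResGe ε c f) a l → (a :: l).Nodup → l ≠ [] →
      ∃ f', Feas c f' ∧
        (∀ p r : V, ¬(p ∈ a :: l ∧ r ∈ a :: l) → f' p r = f p r) ∧
        netOut f' a = netOut f a + ε ∧
        netOut f' (l.getLastD a) = netOut f (l.getLastD a) - ε ∧
        ∀ w, w ≠ a → w ≠ l.getLastD a → netOut f' w = netOut f w := by
  intro l
  induction l with
  | nil => intro a f _ _ _ h; exact absurd rfl h
  | cons b m ih =>
    intro a f hf hch hnd _
    obtain ⟨hab, hbm⟩ := List.isChain_cons_cons.mp hch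
    have hanb : a ∉ b :: m := by
      have := hnd; rw [List.nodup_cons] at this; exact this.1
    have hane : a ≠ b := fun h => hanb (h ▸ List.mem_cons_self)
    obtain ⟨f1, hf1, huntouched1, hOa, hOb, hOw⟩ := step_exact hf hane hε hab
    rcases eq_or_ne m [] with rfl | hm
    · refine ⟨f1, hf1, ?_, ?_, ?_, ?_⟩
      · intro p r hpr
        apply huntouched1
        rintro (⟨rfl, rfl⟩ | ⟨rfl, rfl⟩) <;> simp at hpr
      · exact hOa
      · simpa using hOb
      · intro w hwa hwb
        exact hOw w hwa (by simpa using hwb)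
    · -- recursive case
      have hndb : (b :: m).Nodup := by
        have := hnd; rw [List.nodup_cons] at this; exact this.2
      have hbnm : b ∉ m := by rw [List.nodup_cons] at hndb; exact hndb.1
      have hch1 : List.Chain (ResGe ε c f1) b m := by
        refine chain_of_agree m b hbm ?_
        intro p r hp hr hR
        have hpa : p ≠ a := fun h => hanb (h ▸ hp)
        have hra : r ≠ a := fun h => hanb (h ▸ hr)
        have e1 : f1 p r = f p r := huntouched1 p r (by rintro (⟨rfl, rfl⟩ | ⟨rfl, rfl⟩) <;> simp_all)
        have e2 : f1 r p = f r p := huntouched1 r p (by rintro (⟨rfl, rfl⟩ | ⟨rfl, rfl⟩) <;> simp_all)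
        rw [ResGe, e1, e2]
        exact hR
      obtain ⟨f2, hf2, huntouched2, hOb2, hOlast2, hOw2⟩ := ih b f1 hf1 hch1 hndb hm
      have hlast_mem : m.getLastD b ∈ b :: m := List.mem_cons_of_mem _ (getLastD_mem m b hm)
      have hlast_ne_a : m.getLastD b ≠ a := fun h => hanb (h ▸ hlast_mem)
      have hlast_ne_b : m.getLastD b ≠ b := fun h => hbnm (h ▸ getLastD_mem m b hm)
      refine ⟨f2, hf2, ?_, ?_, ?_, ?_⟩
      · intro p r hpr
        rw [huntouched2, huntouched1]
        · rintro (⟨rfl, rfl⟩ | ⟨rfl, rfl⟩) <;>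
            exact hpr ⟨by simp, by simp⟩
        · intro ⟨hp, hr⟩
          exact hpr ⟨List.mem_cons_of_mem _ hp, List.mem_cons_of_mem _ hr⟩
      · rw [hOw2 a hane (Ne.symm hlast_ne_a), hOa]
      · rw [List.getLastD_cons]
        rw [hOlast2, hOw (m.getLastD b) hlast_ne_a hlast_ne_b]
      · intro w hwa hwlast
        rw [List.getLastD_cons] at hwlast
        rcases eq_or_ne w b with rfl | hwb
        · rw [hOb2, hOb]; ring
        · rw [hOw2 w hwb hwlast, hOw w hwa hwb]

lemma getLastD_append (l1 l2 : List V) (a d : V) :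
    (l1 ++ a :: l2).getLastD d = l2.getLastD a := by
  induction l1 generalizing d with
  | nil => rw [List.nil_append, List.getLastD_cons]
  | cons x xs ih => rw [List.cons_append, List.getLastD_cons]; exact ih x

lemma dedup_chain {R : V → V → Prop} :
    ∀ (n : ℕ) (l : List V) (a : V), l.length ≤ n → List.Chain R a l →
      ∃ l', List.Chain R a l' ∧ (a :: l').Nodup ∧ l'.getLastD a = l.getLastD a ∧ l' ⊆ l := by
  intro n
  induction n with
  | zero =>
    intro l a hl _
    rw [Nat.le_zero, List.length_eq_zero_iff] at hl
    subst hl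
    exact ⟨[], List.Chain.nil, by simp, rfl, by simp⟩
  | succ n ih =>
    intro l a hl hch
    by_cases ha : a ∈ l
    · obtain ⟨l1, l2, rfl⟩ := List.append_of_mem ha
      have hch2 : List.Chain R a l2 := (List.isChain_cons_split.mp hch).2
      have hlen : l2.length ≤ n := by
        have := hl; simp [List.length_append] at this; omega
      obtain ⟨l', h1, h2, h3, h4⟩ := ih l2 a hlen hch2
      exact ⟨l', h1, h2, by rw [h3, getLastD_append], fun x hx => by
        simp only [List.mem_append, List.mem_cons]; exact Or.inr (Or.inr (h4 hx))⟩
    · cases l with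
      | nil => exact ⟨[], List.Chain.nil, by simp, rfl, by simp⟩
      | cons b m =>
        obtain ⟨hab, hbm⟩ := List.isChain_cons_cons.mp hch
        have hlen : m.length ≤ n := by simp at hl; omega
        obtain ⟨l', h1, h2, h3, h4⟩ := ih m b hlen hbm
        refine ⟨b :: l', List.Chain.cons hab h1, ?_, ?_, ?_⟩
        · rw [List.nodup_cons]
          refine ⟨?_, h2⟩
          intro hmem
          apply ha
          rcases List.mem_cons.mp hmem with rfl | hx
          · exact List.mem_cons_self
          · exact List.mem_cons_of_mem _ (h4 hx)
        · rw [List.getLastD_cons, List.getLastD_cons, h3]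
        · intro x hx
          rcases List.mem_cons.mp hx with rfl | hx
          · exact List.mem_cons_self
          · exact List.mem_cons_of_mem _ (h4 hx)

lemma reach_chain {R : V → V → Prop} {s t : V} (h : Relation.ReflTransGen R s t) :
    ∃ l : List V, List.Chain R s l ∧ l.getLastD s = t := by
  induction h using Relation.ReflTransGen.head_induction_on with
  | refl => exact ⟨[], List.Chain.nil, rfl⟩
  | head hab _ ih =>
    obtain ⟨l, hch, hlast⟩ := ih
    rename_i a b _
    exact ⟨b :: l, List.Chain.cons hab hch, by rw [List.getLastD_cons, hlast]⟩

lemma netOut_continuous (v : V) : Continuous (fun f : V → V → ℝ => netOut f v) := by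
  have hev : ∀ a b : V, Continuous (fun f : V → V → ℝ => f a b) :=
    fun a b => (continuous_apply b).comp (continuous_apply a)
  unfold netOut
  exact (continuous_finset_sum _ fun w _ => hev v w).sub
    (continuous_finset_sum _ fun w _ => hev w v)

lemma mfmc (c : V → V → ℝ) (hc : ∀ u v, 0 ≤ c u v) (s t : V) (hst : s ≠ t) :
    ∃ (f : V → V → ℝ) (A : Finset V), Feas c f ∧ (∀ v, v ≠ s → v ≠ t → netOut f v = 0) ∧
      s ∈ A ∧ t ∉ A ∧ netOut f s = cutCap c A := by
  classical
  set K : Set (V → V → ℝ) := {f | Feas c f ∧ ∀ v, v ≠ s → v ≠ t → netOut f v = 0} with hKdef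
  have hK0 : (0 : V → V → ℝ) ∈ K :=
    ⟨fun u v => ⟨le_refl 0, hc u v⟩, fun v _ _ => by simp [netOut]⟩
  have hKc : IsCompact K := by
    have hbox : IsCompact (Set.pi Set.univ
        (fun u : V => Set.pi Set.univ (fun v : V => Set.Icc (0:ℝ) (c u v)))) :=
      isCompact_univ_pi (fun u => isCompact_univ_pi (fun v => isCompact_Icc))
    have hsub : K = (Set.pi Set.univ
        (fun u : V => Set.pi Set.univ (fun v : V => Set.Icc (0:ℝ) (c u v)))) ∩
        {f | ∀ v, v ≠ s → v ≠ t → netOut f v = 0} := by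
      ext f
      simp only [hKdef, Set.mem_inter_iff, Set.mem_setOf_eq, Set.mem_pi, Set.mem_univ,
        forall_true_left, Set.mem_Icc]
      constructor
      · rintro ⟨h1, h2⟩; exact ⟨fun u v => h1 u v, h2⟩
      · rintro ⟨h1, h2⟩; exact ⟨fun u v => h1 u v, h2⟩
    rw [hsub]
    apply hbox.inter_right
    have : {f : V → V → ℝ | ∀ v, v ≠ s → v ≠ t → netOut f v = 0} =
        ⋂ v : V, {f | v ≠ s → v ≠ t → netOut f v = 0} := by
      ext f; simp
    rw [this]
    apply isClosed_iInter
    intro v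
    by_cases hv : v ≠ s ∧ v ≠ t
    · have : {f : V → V → ℝ | v ≠ s → v ≠ t → netOut f v = 0} =
          {f | netOut f v = 0} := by
        ext f; simp [hv.1, hv.2]
      rw [this]
      exact isClosed_eq (netOut_continuous v) continuous_const
    · have : {f : V → V → ℝ | v ≠ s → v ≠ t → netOut f v = 0} = Set.univ := by
        ext f
        simp only [Set.mem_setOf_eq, Set.mem_univ, iff_true]
        intro h1 h2
        exact absurd ⟨h1, h2⟩ hv
      rw [this]
      exact isClosed_univ
  obtain ⟨f, hfK, hmax⟩ := hKc.exists_isMaxOn ⟨0, hK0⟩ (netOut_continuous s).continuousOn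
  obtain ⟨hff, hcons⟩ := hfK
  set R : Set V := {w | Relation.ReflTransGen (Res c f) s w} with hRdef
  set A : Finset V := (Set.toFinite R).toFinset with hAdef
  have hmemA : ∀ w, w ∈ A ↔ Relation.ReflTransGen (Res c f) s w := by
    intro w; rw [hAdef, Set.Finite.mem_toFinset]; rfl
  have hsA : s ∈ A := (hmemA s).mpr Relation.ReflTransGen.refl
  have htA : t ∉ A := by
    intro ht
    obtain ⟨l, hch, hlast⟩ := reach_chain ((hmemA t).mp ht)
    obtain ⟨l', hch', hnd', hlast', hsub'⟩ := dedup_chain l.length l s le_rfl hch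
    have hlne : l' ≠ [] := by
      intro h; rw [h] at hlast'; exact hst (hlast'.trans hlast)
    obtain ⟨ε, hε, hchge⟩ := chain_resge l' s hch'
    obtain ⟨f', hf', _, hOs, hOt, hOw⟩ := augment hε l' s f hff hchge hnd' hlne
    have hlastt : l'.getLastD s = t := hlast'.trans hlast
    have hf'K : f' ∈ K := by
      refine ⟨hf', fun v hvs hvt => ?_⟩
      rw [hOw v hvs (by rw [hlastt]; exact hvt)]
      exact hcons v hvs hvt
    have := hmax hf'K
    simp only [Set.mem_setOf_eq] at this
    rw [hOs] at this
    linarith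
  refine ⟨f, A, hff, hcons, hsA, htA, ?_⟩
  have hnores : ∀ u ∈ A, ∀ v ∈ Aᶜ, f u v = c u v ∧ f v u = 0 := by
    intro u hu v hv
    rw [Finset.mem_compl] at hv
    have hnr : ¬ Res c f u v := by
      intro hr
      exact hv ((hmemA v).mpr (((hmemA u).mp hu).tail hr))
    rw [Res] at hnr
    push_neg at hnr
    exact ⟨le_antisymm (hff u v).2 hnr.1, le_antisymm hnr.2 (hff v u).1⟩
  have h1 : ∑ v ∈ A, netOut f v = netOut f s := by
    rw [← Finset.add_sum_erase _ _ hsA]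
    have : ∑ v ∈ A.erase s, netOut f v = 0 := by
      apply Finset.sum_eq_zero
      intro v hv
      have hvs : v ≠ s := (Finset.mem_erase.mp hv).1
      have hvt : v ≠ t := fun h => htA (h ▸ (Finset.mem_erase.mp hv).2)
      exact hcons v hvs hvt
    rw [this, add_zero]
  rw [← h1, sum_netOut]
  have h2 : ∑ u ∈ A, ∑ v ∈ Aᶜ, f u v = cutCap c A := by
    apply Finset.sum_congr rfl
    intro u hu
    apply Finset.sum_congr rfl
    intro v hv
    exact (hnores u hu v hv).1
  have h3 : ∑ u ∈ A, ∑ v ∈ Aᶜ, f v u = 0 := by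
    apply Finset.sum_eq_zero
    intro u hu
    apply Finset.sum_eq_zero
    intro v hv
    exact (hnores u hu v hv).2
  rw [h2, h3, sub_zero]

lemma collapse {k : ℕ} (q : Fin k → V) (g : Fin k → ℝ) (P : V → Prop) [DecidablePred P] :
    ∑ v, (if P v then (∑ i, if q i = v then g i else 0) else 0)
      = ∑ i, if P (q i) then g i else 0 := by
  have e1 : ∀ v, (if P v then (∑ i, if q i = v then g i else 0) else 0)
      = ∑ i, if v = q i then (if P v then g i else 0) else 0 := by
    intro v
    by_cases hv : P v
    · rw [if_pos hv]
      apply Finset.sum_congr rfl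
      intro i _
      by_cases h : q i = v
      · rw [if_pos h, if_pos h.symm, if_pos hv]
      · rw [if_neg h, if_neg (fun hh => h hh.symm)]
    · rw [if_neg hv]
      symm
      apply Finset.sum_eq_zero
      intro i _
      by_cases h : v = q i
      · subst h; simp [hv]
      · simp [h]
  simp only [e1]
  rw [Finset.sum_comm]
  apply Finset.sum_congr rfl
  intro i _
  rw [Finset.sum_ite_eq' Finset.univ (q i) (fun v => if P v then g i else 0)]
  simp

lemma cutCap_eq_sum_ite (c : V → V → ℝ) (A : Finset V) :
    cutCap c A = ∑ u, ∑ v, if u ∈ A ∧ v ∉ A then c u v else 0 := by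
  unfold cutCap
  rw [← Finset.sum_filter_add_sum_filter_not Finset.univ (· ∈ A)
    (fun u => ∑ v, if u ∈ A ∧ v ∉ A then c u v else 0)]
  have h2 : ∑ u ∈ Finset.univ.filter (fun u => ¬ u ∈ A),
      (∑ v, if u ∈ A ∧ v ∉ A then c u v else 0) = 0 := by
    apply Finset.sum_eq_zero
    intro u hu
    rw [Finset.mem_filter] at hu
    apply Finset.sum_eq_zero
    intro v _
    rw [if_neg (fun h => hu.2 h.1)]
  rw [h2, add_zero]
  have h3 : Finset.univ.filter (fun u => u ∈ A) = A := by
    ext u; simp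
  rw [h3]
  apply Finset.sum_congr rfl
  intro u hu
  rw [← Finset.sum_filter_add_sum_filter_not Finset.univ (fun v => v ∉ A)
    (fun v => if u ∈ A ∧ v ∉ A then c u v else 0)]
  have h4 : ∑ v ∈ Finset.univ.filter (fun v => ¬ v ∉ A),
      (if u ∈ A ∧ v ∉ A then c u v else 0) = 0 := by
    apply Finset.sum_eq_zero
    intro v hv
    rw [Finset.mem_filter] at hv
    rw [if_neg (fun h => hv.2 h.2)]
  rw [h4, add_zero]
  have h5 : Finset.univ.filter (fun v => v ∉ A) = Aᶜ := by
    ext v; simp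
  rw [h5]
  apply Finset.sum_congr rfl
  intro v hv
  rw [Finset.mem_compl] at hv
  rw [if_pos ⟨hu, hv⟩]

/-- Augmented capacity function on `V ⊕ Bool` (`inr true` = super source, `inr false` = super sink). -/
def caug {V : Type} [Fintype V] [DecidableEq V] {k : ℕ} (c : V → V → ℝ) (q : Fin k → V)
    (x : Fin k → ℝ) : (V ⊕ Bool) → (V ⊕ Bool) → ℝ
  | Sum.inl u, Sum.inl v => c u v
  | Sum.inr true, Sum.inl v => ∑ i, if q i = v then max (x i) 0 else 0
  | Sum.inl v, Sum.inr false => ∑ i, if q i = v then max (-(x i)) 0 else 0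
  | _, _ => 0

section caugLemmas

variable {k : ℕ} (c : V → V → ℝ) (q : Fin k → V) (x : Fin k → ℝ)

lemma caug_inl_inl (u v : V) : caug c q x (Sum.inl u) (Sum.inl v) = c u v := rfl

lemma caug_src_inl (v : V) :
    caug c q x (Sum.inr true) (Sum.inl v) = ∑ i, if q i = v then max (x i) 0 else 0 := rfl

lemma caug_inl_snk (v : V) :
    caug c q x (Sum.inl v) (Sum.inr false) = ∑ i, if q i = v then max (-(x i)) 0 else 0 := rfl

lemma caug_to_src (a : V ⊕ Bool) : caug c q x a (Sum.inr true) = 0 := by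
  rcases a with v | b
  · rfl
  · rcases b with _ | _ <;> rfl

lemma caug_from_snk (a : V ⊕ Bool) : caug c q x (Sum.inr false) a = 0 := by
  rcases a with v | b
  · rfl
  · rcases b with _ | _ <;> rfl

lemma caug_inl_src (v : V) : caug c q x (Sum.inl v) (Sum.inr true) = 0 := rfl

lemma caug_src_snk : caug c q x (Sum.inr true) (Sum.inr false) = 0 := rfl

lemma caug_nonneg (hc : ∀ u v, 0 ≤ c u v) (a b : V ⊕ Bool) : 0 ≤ caug c q x a b := by
  rcases a with u | s <;> rcases b with v | t
  · exact hc u v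
  · rcases t with _ | _
    · rw [caug_inl_snk]
      apply Finset.sum_nonneg
      intro i _
      by_cases h : q i = u <;> simp [h, le_max_right]
    · exact le_refl 0
  · rcases s with _ | _
    · exact le_refl 0
    · rw [caug_src_inl]
      apply Finset.sum_nonneg
      intro i _
      by_cases h : q i = v <;> simp [h, le_max_right]
  · rcases s with _ | _ <;> rcases t with _ | _ <;> exact le_refl 0

end caugLemmas

lemma cutCap_caug {k : ℕ} (c : V → V → ℝ) (q : Fin k → V) (x : Fin k → ℝ)
    (A : Finset (V ⊕ Bool)) (hsA : Sum.inr true ∈ A) (htA : Sum.inr false ∉ A) :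
    cutCap (caug c q x) A =
      cutCap c (Finset.univ.filter fun v => Sum.inl v ∈ A)
      + (∑ i ∈ Finset.univ.filter (fun i => Sum.inl (q i) ∈ A), max (-(x i)) 0)
      + ∑ i ∈ (Finset.univ.filter (fun i => Sum.inl (q i) ∈ A))ᶜ, max (x i) 0 := by
  classical
  set B : Finset V := Finset.univ.filter (fun v => Sum.inl v ∈ A) with hB
  set S : Finset (Fin k) := Finset.univ.filter (fun i => Sum.inl (q i) ∈ A) with hS
  have hmemB : ∀ v : V, v ∈ B ↔ Sum.inl v ∈ A := by intro v; rw [hB, Finset.mem_filter]; simp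
  have hmemS : ∀ i, i ∈ S ↔ Sum.inl (q i) ∈ A := by intro i; rw [hS, Finset.mem_filter]; simp
  rw [cutCap_eq_sum_ite, Fintype.sum_sum_type]
  have hinner : ∀ u : V ⊕ Bool,
      (∑ v : V ⊕ Bool, if u ∈ A ∧ v ∉ A then caug c q x u v else 0)
      = (∑ v : V, if u ∈ A ∧ Sum.inl v ∉ A then caug c q x u (Sum.inl v) else 0)
        + ((if u ∈ A ∧ Sum.inr true ∉ A then caug c q x u (Sum.inr true) else 0)
        + (if u ∈ A ∧ Sum.inr false ∉ A then caug c q x u (Sum.inr false) else 0)) := by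
    intro u
    rw [Fintype.sum_sum_type, Fintype.sum_bool]
  simp only [hinner]
  rw [Fintype.sum_bool, Finset.sum_add_distrib]
  have p1 : ∑ u : V, (∑ v : V, if Sum.inl u ∈ A ∧ Sum.inl v ∉ A then
      caug c q x (Sum.inl u) (Sum.inl v) else 0) = cutCap c B := by
    rw [cutCap_eq_sum_ite c B]
    apply Finset.sum_congr rfl; intro u _
    apply Finset.sum_congr rfl; intro v _
    rw [caug_inl_inl]
    apply if_congr _ rfl rfl
    rw [hmemB, hmemB]
  have p2 : ∑ u : V, ((if Sum.inl u ∈ A ∧ Sum.inr true ∉ A then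
        caug c q x (Sum.inl u) (Sum.inr true) else 0)
      + (if Sum.inl u ∈ A ∧ Sum.inr false ∉ A then
        caug c q x (Sum.inl u) (Sum.inr false) else 0))
      = ∑ i ∈ S, max (-(x i)) 0 := by
    have e : ∀ u : V, ((if Sum.inl u ∈ A ∧ Sum.inr true ∉ A then
          caug c q x (Sum.inl u) (Sum.inr true) else 0)
        + (if Sum.inl u ∈ A ∧ Sum.inr false ∉ A then
          caug c q x (Sum.inl u) (Sum.inr false) else 0))
        = (if u ∈ B then (∑ i, if q i = u then max (-(x i)) 0 else 0) else 0) := by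
      intro u
      rw [caug_inl_src, caug_inl_snk]
      rw [ite_self, zero_add]
      apply if_congr _ rfl rfl
      constructor
      · intro h; exact (hmemB u).mpr h.1
      · intro h; exact ⟨(hmemB u).mp h, htA⟩
    simp only [e]
    rw [collapse q (fun i => max (-(x i)) 0) (· ∈ B)]
    rw [Finset.sum_filter]
    apply Finset.sum_congr rfl; intro i _
    apply if_congr _ rfl rfl
    exact hmemB (q i)
  have p3 : ((∑ v : V, if Sum.inr true ∈ A ∧ Sum.inl v ∉ A then
        caug c q x (Sum.inr true) (Sum.inl v) else 0)
      + ((if Sum.inr true ∈ A ∧ Sum.inr true ∉ A then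
          caug c q x (Sum.inr true) (Sum.inr true) else 0)
      + (if Sum.inr true ∈ A ∧ Sum.inr false ∉ A then
          caug c q x (Sum.inr true) (Sum.inr false) else 0)))
      = ∑ i ∈ Sᶜ, max (x i) 0 := by
    rw [caug_src_snk, ite_self, caug_to_src, ite_self, add_zero, add_zero]
    have e : ∀ v : V, (if Sum.inr true ∈ A ∧ Sum.inl v ∉ A then
        caug c q x (Sum.inr true) (Sum.inl v) else 0)
        = (if Sum.inl v ∉ A then (∑ i, if q i = v then max (x i) 0 else 0) else 0) := by
      intro v
      rw [caug_src_inl]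
      apply if_congr _ rfl rfl
      simp [hsA]
    simp only [e]
    rw [collapse q (fun i => max (x i) 0) (fun v => Sum.inl v ∉ A)]
    have : ∑ i ∈ Sᶜ, max (x i) 0 = ∑ i, if i ∈ Sᶜ then max (x i) 0 else 0 := by
      rw [Finset.sum_ite_mem, Finset.univ_inter]
    rw [this]
    apply Finset.sum_congr rfl; intro i _
    apply if_congr _ rfl rfl
    rw [Finset.mem_compl, hmemS]
  have p4 : ((∑ v : V, if Sum.inr false ∈ A ∧ Sum.inl v ∉ A then
        caug c q x (Sum.inr false) (Sum.inl v) else 0)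
      + ((if Sum.inr false ∈ A ∧ Sum.inr true ∉ A then
          caug c q x (Sum.inr false) (Sum.inr true) else 0)
      + (if Sum.inr false ∈ A ∧ Sum.inr false ∉ A then
          caug c q x (Sum.inr false) (Sum.inr false) else 0)))
      = 0 := by
    simp [htA]
  rw [p1, p2, p3, p4]
  ring

lemma sum_indicator_q {k : ℕ} (q : Fin k → V) (g : Fin k → ℝ) :
    ∑ v : V, (∑ i, if q i = v then g i else 0) = ∑ i, g i := by
  rw [Finset.sum_comm]
  apply Finset.sum_congr rfl
  intro i _
  rw [Finset.sum_ite_eq Finset.univ (q i) (fun _ => g i)]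
  simp

lemma max_sub_max_neg (r : ℝ) : max r 0 - max (-r) 0 = r := by
  rcases le_total r 0 with h | h
  · rw [max_eq_right h, max_eq_left (neg_nonneg.mpr h)]; ring
  · rw [max_eq_left h, max_eq_right (neg_nonpos.mpr h)]; ring


theorem stmt3 {V : Type} [Fintype V] [DecidableEq V] {k : ℕ} (c : V → V → ℝ)
    (hc : ∀ u v, 0 ≤ c u v) (q : Fin k → V) (hq : Function.Injective q)
    (x : Fin k → ℝ) :
    (∃ f, IsExtFlow c f q x) ↔
      ((∑ i, x i) = 0 ∧
        ∀ S : Finset (Fin k), S.Nonempty → S ≠ Finset.univ →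
          ∑ i ∈ S, x i ≤ minCut c (S.image q) (Sᶜ.image q)) := by
  classical
  constructor
  · rintro ⟨f, hcap, hcons, hterm⟩
    have htotal : ∑ i, x i = 0 := by
      have h0 := sum_netOut_univ f
      rw [← Finset.sum_compl_add_sum (Finset.univ.image q) (netOut f)] at h0
      have hz : ∑ v ∈ (Finset.univ.image q)ᶜ, netOut f v = 0 := by
        apply Finset.sum_eq_zero
        intro v hv
        rw [Finset.mem_compl] at hv
        apply hcons
        intro i hi
        exact hv (Finset.mem_image.mpr ⟨i, Finset.mem_univ i, hi⟩)
      rw [hz, zero_add, Finset.sum_image (fun i _ j _ h => hq h)] at h0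
      rw [← h0]
      exact Finset.sum_congr rfl (fun i _ => (hterm i).symm)
    refine ⟨htotal, ?_⟩
    intro S hSne hSuniv
    apply le_csInf
    · exact ⟨cutCap c (S.image q), S.image q, Finset.Subset.refl _,
        (Finset.disjoint_image hq).mpr disjoint_compl_left, rfl⟩
    · rintro b ⟨A, hSA, hdisj, rfl⟩
      have key : ∑ i ∈ S, x i = ∑ v ∈ A, netOut f v := by
        have hsub : ∑ v ∈ S.image q, netOut f v = ∑ v ∈ A, netOut f v := by
          apply Finset.sum_subset hSA
          intro v hvA hvn
          apply hcons
          intro i hi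
          by_cases hiS : i ∈ S
          · exact hvn (Finset.mem_image.mpr ⟨i, hiS, hi⟩)
          · have hmem : v ∈ Sᶜ.image q :=
              Finset.mem_image.mpr ⟨i, Finset.mem_compl.mpr hiS, hi⟩
            exact absurd hvA (Finset.disjoint_left.mp hdisj hmem)
        rw [← hsub, Finset.sum_image (fun i _ j _ h => hq h)]
        exact Finset.sum_congr rfl (fun i _ => (hterm i).symm)
      rw [key]
      exact sum_netOut_le hcap A
  · rintro ⟨h1, h2⟩
    obtain ⟨F, A, hFeas, hFcons, hsA, htA, hval⟩ :=
      mfmc (caug c q x) (caug_nonneg c q x hc) (Sum.inr true) (Sum.inr false) (by simp)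
    set D : ℝ := ∑ i, max (x i) 0 with hD
    have hDD' : D = ∑ i, max (-(x i)) 0 := by
      have hs : ∑ i, (max (x i) 0 - max (-(x i)) 0) = ∑ i, x i :=
        Finset.sum_congr rfl (fun i _ => max_sub_max_neg (x i))
      rw [Finset.sum_sub_distrib, h1] at hs
      linarith
    -- the min cut is at least D
    have hcut : D ≤ cutCap (caug c q x) A := by
      rw [cutCap_caug c q x A hsA htA]
      set B : Finset V := Finset.univ.filter (fun v => Sum.inl v ∈ A) with hB
      set S : Finset (Fin k) := Finset.univ.filter (fun i => Sum.inl (q i) ∈ A) with hS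
      have hmemB : ∀ v : V, v ∈ B ↔ Sum.inl v ∈ A := by
        intro v; rw [hB, Finset.mem_filter]; simp
      have hmemS : ∀ i, i ∈ S ↔ Sum.inl (q i) ∈ A := by
        intro i; rw [hS, Finset.mem_filter]; simp
      have hSB : ∑ i ∈ S, x i ≤ cutCap c B := by
        rcases eq_or_ne S ∅ with hSe | hSne
        · rw [hSe]; simpa using cutCap_nonneg hc B
        rcases eq_or_ne S Finset.univ with hSu | hSuniv
        · rw [hSu, h1]; exact cutCap_nonneg hc B
        refine le_trans (h2 S (Finset.nonempty_of_ne_empty hSne) hSuniv) ?_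
        apply csInf_le
        · exact ⟨0, fun y ⟨A', _, _, hy⟩ => hy ▸ cutCap_nonneg hc A'⟩
        · refine ⟨B, ?_, ?_, rfl⟩
          · intro v hv
            obtain ⟨i, hiS, rfl⟩ := Finset.mem_image.mp hv
            exact (hmemB (q i)).mpr ((hmemS i).mp hiS)
          · rw [Finset.disjoint_left]
            intro v hv hvB
            obtain ⟨j, hjS, rfl⟩ := Finset.mem_image.mp hv
            rw [Finset.mem_compl] at hjS
            exact hjS ((hmemS j).mpr ((hmemB (q j)).mp hvB))
      have hid1 : ∑ i ∈ S, x i = (∑ i ∈ S, max (x i) 0) - ∑ i ∈ S, max (-(x i)) 0 := by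
        rw [← Finset.sum_sub_distrib]
        exact Finset.sum_congr rfl (fun i _ => (max_sub_max_neg (x i)).symm)
      have hid2 : (∑ i ∈ Sᶜ, max (x i) 0) + ∑ i ∈ S, max (x i) 0 = D :=
        Finset.sum_compl_add_sum S _
      linarith
    have hFsrc_in : ∀ w, F w (Sum.inr true) = 0 := fun w =>
      le_antisymm (le_trans (hFeas w _).2 (le_of_eq (caug_to_src c q x w))) (hFeas w _).1
    have hFsnk_out : ∀ w, F (Sum.inr false) w = 0 := fun w =>
      le_antisymm (le_trans (hFeas _ w).2 (le_of_eq (caug_from_snk c q x w))) (hFeas _ w).1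
    have hsumCsrc : ∑ w, caug c q x (Sum.inr true) w = D := by
      rw [Fintype.sum_sum_type, Fintype.sum_bool, caug_to_src, caug_src_snk]
      simp only [caug_src_inl]
      rw [sum_indicator_q q (fun i => max (x i) 0)]
      ring
    have hsumCsnk : ∑ w, caug c q x w (Sum.inr false) = D := by
      rw [Fintype.sum_sum_type, Fintype.sum_bool, caug_src_snk, caug_from_snk]
      simp only [caug_inl_snk]
      rw [sum_indicator_q q (fun i => max (-(x i)) 0)]
      rw [hDD']
      ring
    have hnetsrc : netOut F (Sum.inr true) = ∑ w, F (Sum.inr true) w := by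
      unfold netOut
      rw [Finset.sum_congr rfl (fun w _ => hFsrc_in w), Finset.sum_const_zero, sub_zero]
    have hvalD : netOut F (Sum.inr true) = D := by
      have hub : netOut F (Sum.inr true) ≤ D := by
        rw [hnetsrc, ← hsumCsrc]
        exact Finset.sum_le_sum (fun w _ => (hFeas _ w).2)
      have hlb : D ≤ netOut F (Sum.inr true) := hval ▸ hcut
      linarith
    have hsat_src : ∀ w, F (Sum.inr true) w = caug c q x (Sum.inr true) w := by
      have hsum : ∑ w, F (Sum.inr true) w = ∑ w, caug c q x (Sum.inr true) w := by
        rw [hsumCsrc, ← hnetsrc, hvalD]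
      have := (Finset.sum_eq_sum_iff_of_le (fun w _ => (hFeas (Sum.inr true) w).2)).mp hsum
      exact fun w => this w (Finset.mem_univ w)
    have hnetsnk : netOut F (Sum.inr false) = -(∑ w, F w (Sum.inr false)) := by
      unfold netOut
      rw [Finset.sum_congr rfl (fun w _ => hFsnk_out w), Finset.sum_const_zero, zero_sub]
    have hnetsnkD : netOut F (Sum.inr false) = -D := by
      have h0 := sum_netOut_univ F
      rw [Fintype.sum_sum_type, Fintype.sum_bool] at h0
      have hz : ∑ v : V, netOut F (Sum.inl v) = 0 :=
        Finset.sum_eq_zero (fun v _ => hFcons (Sum.inl v) (by simp) (by simp))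
      rw [hz, hvalD] at h0
      linarith
    have hsat_snk : ∀ w, F w (Sum.inr false) = caug c q x w (Sum.inr false) := by
      have hsum : ∑ w, F w (Sum.inr false) = ∑ w, caug c q x w (Sum.inr false) := by
        rw [hsumCsnk]
        have := hnetsnkD
        rw [hnetsnk] at this
        linarith
      have := (Finset.sum_eq_sum_iff_of_le (fun w _ => (hFeas w (Sum.inr false)).2)).mp hsum
      exact fun w => this w (Finset.mem_univ w)
    refine ⟨fun u v => F (Sum.inl u) (Sum.inl v), ?_, ?_, ?_⟩
    · intro u v
      exact ⟨(hFeas (Sum.inl u) (Sum.inl v)).1, (hFeas (Sum.inl u) (Sum.inl v)).2⟩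
    all_goals {
      have hnet : ∀ v : V, netOut (fun a b => F (Sum.inl a) (Sum.inl b)) v
          = ∑ i, if q i = v then x i else 0 := by
        intro v
        have hrow : ∑ w : V ⊕ Bool, F (Sum.inl v) w
            = (∑ u : V, F (Sum.inl v) (Sum.inl u))
              + (F (Sum.inl v) (Sum.inr true) + F (Sum.inl v) (Sum.inr false)) := by
          rw [Fintype.sum_sum_type, Fintype.sum_bool]
        have hcol : ∑ w : V ⊕ Bool, F w (Sum.inl v)
            = (∑ u : V, F (Sum.inl u) (Sum.inl v))
              + (F (Sum.inr true) (Sum.inl v) + F (Sum.inr false) (Sum.inl v)) := by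
          rw [Fintype.sum_sum_type, Fintype.sum_bool]
        have h0 : netOut F (Sum.inl v) = 0 := hFcons (Sum.inl v) (by simp) (by simp)
        unfold netOut at h0 ⊢
        rw [hrow, hcol] at h0
        rw [hFsrc_in (Sum.inl v), hFsnk_out (Sum.inl v), hsat_snk (Sum.inl v),
          hsat_src (Sum.inl v), caug_inl_snk, caug_src_inl] at h0
        have : (∑ u : V, F (Sum.inl v) (Sum.inl u)) - (∑ u : V, F (Sum.inl u) (Sum.inl v))
            = (∑ i, if q i = v then max (x i) 0 else 0)
              - ∑ i, if q i = v then max (-(x i)) 0 else 0 := by linarith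
        rw [this, ← Finset.sum_sub_distrib]
        apply Finset.sum_congr rfl
        intro i _
        by_cases h : q i = v
        · rw [if_pos h, if_pos h, if_pos h]
          exact max_sub_max_neg (x i)
        · rw [if_neg h, if_neg h, if_neg h, sub_zero]
      first
      | { intro v hv
          rw [hnet v]
          exact Finset.sum_eq_zero (fun i _ => if_neg (hv i)) }
      | { intro i
          rw [hnet (q i)]
          rw [Finset.sum_eq_single_of_mem i (Finset.mem_univ i)
            (fun j _ hj => if_neg (fun h => hj (hq h)))]
          exact if_pos rfl }
    }
end
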